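/- For every integer n ≥ 1 and every real x, F_n(3x) + 3x·F_{n-1}(3x) = B_n(x) − Σ_{k=1}^{n-2} (3x·B_{n-k}(x) − 2·B_{n-k-1}(x))·F_k(3x), where B_m(x) denotes the balancing polynomials. -/

import Mathlib

/-- Chebyshev polynomials of the first kind. -/
def T : ℕ → ℝ → ℝ
  | 0, _ => 1
  | 1, x => x
  | (n+2), x => 2*x*T (n+1) x - T n x

/-- Chebyshev polynomials of the second kind. -/
def U : ℕ → ℝ → ℝ
  | 0, _ => 1
  | 1, x => 2*x
  | (n+2), x => 2*x*U (n+1) x - U n x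

/-- Fibonacci polynomials. -/
def F : ℕ → ℝ → ℝ
  | 0, _ => 0
  | 1, _ => 1
  | (n+2), x => x*F (n+1) x + F n x

/-- Balancing polynomials. -/
def B : ℕ → ℝ → ℝ
  | 0, _ => 0
  | 1, _ => 1
  | (n+2), x => 6*x*B (n+1) x - B n x

/-- Lucas-balancing polynomials. -/
def C : ℕ → ℝ → ℝ
  | 0, _ => 1
  | 1, x => 3*x
  | (n+2), x => 6*x*C (n+1) x - C n x

/-- Lucas numbers. -/
def lucas : ℕ → ℤ
  | 0 => 2
  | 1 => 1
  | (n+2) => lucas (n+1) + lucas n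

lemma key (x : ℝ) : ∀ m : ℕ, F (m+2) (3*x) + 3*x * F (m+1) (3*x) =
    B (m+2) x - ∑ k ∈ Finset.Icc 1 m, (3*x * B (m+2-k) x - 2 * B (m+1-k) x) * F k (3*x) := by
  intro m
  induction m using Nat.twoStepInduction with
  | zero => simp [F, B]; ring
  | one => simp [F, B]; ring
  | more n IH1 IH2 =>
    have hF : ∀ m : ℕ, F (m+2) (3*x) = 3*x * F (m+1) (3*x) + F m (3*x) := fun m => rfl
    have hB : ∀ m : ℕ, B (m+2) x = 6*x * B (m+1) x - B m x := fun m => rfl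
    -- peel top two elements of the sum
    rw [show n+2 = (n+1)+1 from rfl,
        Finset.sum_Icc_succ_top (by omega : 1 ≤ (n+1)+1),
        Finset.sum_Icc_succ_top (by omega : 1 ≤ n+1)]
    -- rewrite the remaining sum
    have e3 : ∑ k ∈ Finset.Icc 1 n, (3*x * B ((n+1)+1+2-k) x - 2 * B ((n+1)+1+1-k) x) * F k (3*x)
        = ∑ k ∈ Finset.Icc 1 n,
          (6*x * ((3*x * B (n+1+2-k) x - 2 * B (n+1+1-k) x) * F k (3*x))
            - (3*x * B (n+2-k) x - 2 * B (n+1-k) x) * F k (3*x)) := by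
      refine Finset.sum_congr rfl fun k hk => ?_
      simp only [Finset.mem_Icc] at hk
      obtain ⟨j, hj⟩ : ∃ j, n - k = j := ⟨n - k, rfl⟩
      simp only [show (n+1)+1+2-k = j+4 by omega, show (n+1)+1+1-k = j+3 by omega,
          show n+1+2-k = j+3 by omega, show n+1+1-k = j+2 by omega,
          show n+2-k = j+2 by omega, show n+1-k = j+1 by omega]
      rw [hB (j+2), hB (j+1)]
      ring
    rw [e3, Finset.sum_sub_distrib, ← Finset.mul_sum]
    have e4 : ∑ k ∈ Finset.Icc 1 (n+1), (3*x * B (n+1+2-k) x - 2 * B (n+1+1-k) x) * F k (3*x)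
        = (∑ k ∈ Finset.Icc 1 n, (3*x * B (n+1+2-k) x - 2 * B (n+1+1-k) x) * F k (3*x))
          + (3*x * B (n+1+2-(n+1)) x - 2 * B (n+1+1-(n+1)) x) * F (n+1) (3*x) :=
      Finset.sum_Icc_succ_top (by omega) _
    rw [e4] at IH2
    have b2 : B 2 x = 6*x := by simp [B]
    have b3 : B 3 x = 6*x*(6*x) - 1 := by rw [hB 1]; simp [B, b2]
    simp only [show n+1+2-(n+1) = 2 by omega, show n+1+1-(n+1) = 1 by omega,
      show (n+1)+1+2-((n+1)+1) = 2 by omega, show (n+1)+1+1-((n+1)+1) = 1 by omega,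
      show (n+1)+1+2-(n+1) = 3 by omega, show (n+1)+1+1-(n+1) = 2 by omega] at *
    rw [show (n+1)+1+2 = n+2+2 from rfl, show (n+1)+1+1 = n+3 from rfl] at *
    rw [hF (n+2), hF (n+1), hB (n+2), b2, b3, show B 1 x = 1 from rfl] at *
    linear_combination (6*x) * IH2 - IH1

theorem stmt13 (n : ℕ) (hn : 1 ≤ n) (x : ℝ) :
    F n (3*x) + 3*x * F (n-1) (3*x) =
      B n x - ∑ k ∈ Finset.Icc 1 (n-2), (3*x * B (n-k) x - 2 * B (n-k-1) x) * F k (3*x) := by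
  match n, hn with
  | 1, _ => simp [F, B]
  | (m+2), _ =>
    have h := key x m
    rw [show m+2-1 = m+1 by omega, show m+2-2 = m by omega]
    rw [h]
    congr 1
    refine Finset.sum_congr rfl fun k hk => ?_
    simp only [Finset.mem_Icc] at hk
    rw [show m+2-k-1 = m+1-k by omega]
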